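/- arXiv:2509.03992 — 2 statements merged into one kernel-verified Lean document; each statement's English description precedes it below -/
import Mathlib

section
/- Let γ ↦ A^γ be a C^1 family of M×M real matrices, γ ↦ v^γ a C^1 family of vectors in R^M, and w ∈ R^M fixed; write A = A^0, v = v^0, δA = (d/dγ)A^γ|_{γ=0}, δv = (d/dγ)v^γ|_{γ=0}. Then, as t → 0⁺, the γ-derivative at γ = 0 of log det(I + t A^γ + √t · w (v^γ)^T) equals √t ⟨δv, w⟩ + t ( tr(δA) − ⟨v, w⟩⟨δv, w⟩ ) + o(t). -/
open Matrix Filter Topology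

attribute [local instance] Matrix.frobeniusNormedAddCommGroup Matrix.frobeniusNormedSpace

noncomputable def detCM (M : ℕ) : ContinuousMultilinearMap ℝ (fun _ : Fin M => Fin M → ℝ) ℝ where
  toMultilinearMap := (Matrix.detRowAlternating (n := Fin M) (R := ℝ)).toMultilinearMap
  cont := by
    show Continuous fun m : Fin M → Fin M → ℝ => (Matrix.of m).det
    simp_rw [Matrix.det_apply]
    refine continuous_finset_sum _ fun l _ => Continuous.const_smul ?_ _
    exact continuous_finset_prod _ fun i _ =>
      (continuous_apply i).comp (continuous_apply (l i))

lemma hasDerivAt_det' {M : ℕ} {F : ℝ → Matrix (Fin M) (Fin M) ℝ}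
    {F' : Matrix (Fin M) (Fin M) ℝ} {x : ℝ}
    (hF : ∀ i j, HasDerivAt (fun γ => F γ i j) (F' i j) x) :
    HasDerivAt (fun γ => (F γ).det) ((adjugate (F x) * F').trace) x := by
  classical
  have hrows : HasDerivAt (fun γ => (fun i => F γ i : ∀ _ : Fin M, Fin M → ℝ))
      (fun i => F' i) x :=
    hasDerivAt_pi.2 fun i => hasDerivAt_pi.2 fun j => hF i j
  have h1 : HasDerivAt (fun γ => detCM M (fun i => F γ i))
      ((detCM M).linearDeriv (fun i => F x i) (fun i => F' i)) x :=
    ((detCM M).hasFDerivAt _).comp_hasDerivAt x hrows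
  have h2 : (fun γ => detCM M (fun i => F γ i)) = fun γ => (F γ).det := rfl
  rw [h2] at h1
  convert h1 using 1
  rw [ContinuousMultilinearMap.linearDeriv_apply]
  have h3 : ∀ i : Fin M, detCM M (Function.update (fun i => F x i) i (F' i))
      = ∑ j, F' i j * adjugate (F x) j i := by
    intro i
    have hu : Function.update (fun i => F x i) i (F' i)
        = fun k => ((F x).updateRow i (∑ j, F' i j • (Pi.single j 1 : Fin M → ℝ))) k := by
      funext k
      have : (∑ j, F' i j • (Pi.single j 1 : Fin M → ℝ)) = F' i := by
        funext l
        simp [Pi.single_apply]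
      rw [this]
      rfl
    rw [hu]
    have : detCM M (fun k => ((F x).updateRow i (∑ j, F' i j • (Pi.single j 1 : Fin M → ℝ))) k)
        = ((F x).updateRow i (∑ j, F' i j • (Pi.single j 1 : Fin M → ℝ))).det := rfl
    rw [this]
    have hms := MultilinearMap.map_update_sum
      (Matrix.detRowAlternating (n := Fin M) (R := ℝ)).toMultilinearMap
      Finset.univ i (fun j => F' i j • (Pi.single j 1 : Fin M → ℝ)) (F x)
    have hms' : ((F x).updateRow i (∑ j, F' i j • (Pi.single j 1 : Fin M → ℝ))).det
        = ∑ j, ((F x).updateRow i (F' i j • (Pi.single j 1 : Fin M → ℝ))).det := hms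
    rw [hms']
    refine Finset.sum_congr rfl fun j _ => ?_
    rw [Matrix.det_updateRow_smul, Matrix.adjugate_apply]
  simp_rw [h3]
  rw [Matrix.trace]
  simp only [Matrix.diag_apply, Matrix.mul_apply]
  rw [Finset.sum_comm]
  refine Finset.sum_congr rfl fun i _ => Finset.sum_congr rfl fun j _ => mul_comm _ _

noncomputable def entryCLM (M : ℕ) (i j : Fin M) : Matrix (Fin M) (Fin M) ℝ →L[ℝ] ℝ :=
  LinearMap.toContinuousLinearMap
    { toFun := fun m => m i j
      map_add' := fun _ _ => rfl
      map_smul' := fun _ _ => rfl }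

lemma hasDerivAt_entry {M : ℕ} {F : ℝ → Matrix (Fin M) (Fin M) ℝ}
    {F' : Matrix (Fin M) (Fin M) ℝ} {x : ℝ} (hF : HasDerivAt F F' x) (i j : Fin M) :
    HasDerivAt (fun γ => F γ i j) (F' i j) x :=
  (entryCLM M i j).hasFDerivAt.comp_hasDerivAt x hF

lemma trace_vecMulVec {M : ℕ} (a b : Fin M → ℝ) : (vecMulVec a b).trace = a ⬝ᵥ b := by
  rw [Matrix.vecMulVec_eq (Fin 1), Matrix.trace_replicateCol_mul_replicateRow]

lemma vecMulVec_mul_vecMulVec {M : ℕ} (a b c d : Fin M → ℝ) :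
    vecMulVec a b * vecMulVec c d = (b ⬝ᵥ c) • vecMulVec a d := by
  ext i k
  simp only [Matrix.mul_apply, vecMulVec_apply, Matrix.smul_apply, dotProduct,
    smul_eq_mul, Finset.sum_mul, Finset.mul_sum]
  refine Finset.sum_congr rfl fun j _ => ?_
  ring

lemma trace_adj_expand {m : ℕ} (E H : Matrix (Fin m) (Fin m) ℝ) :
    (adjugate (1 + E) * H).trace
      = (1 + E).det * H.trace - (1 + E).det * (E * H).trace
        + (adjugate (1 + E) * (E * (E * H))).trace := by
  have h1 : adjugate (1 + E)
      = (1 + E).det • (1 : Matrix (Fin m) (Fin m) ℝ) - adjugate (1 + E) * E := by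
    have h := Matrix.adjugate_mul (1 + E)
    rw [Matrix.mul_add, Matrix.mul_one] at h
    exact eq_sub_of_add_eq h
  have h2 : adjugate (1 + E) * H
      = (1 + E).det • H - (1 + E).det • (E * H) + adjugate (1 + E) * (E * (E * H)) := by
    calc adjugate (1 + E) * H
        = ((1 + E).det • 1 - adjugate (1 + E) * E) * H := by rw [← h1]
      _ = (1 + E).det • H - adjugate (1 + E) * (E * H) := by
          rw [Matrix.sub_mul, Matrix.smul_mul, Matrix.one_mul, Matrix.mul_assoc]
      _ = (1 + E).det • H
            - ((1 + E).det • 1 - adjugate (1 + E) * E) * (E * H) := by rw [← h1]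
      _ = _ := by
          rw [Matrix.sub_mul, Matrix.smul_mul, Matrix.one_mul, Matrix.mul_assoc]
          abel
  rw [h2, Matrix.trace_add, Matrix.trace_sub, Matrix.trace_smul, Matrix.trace_smul,
    smul_eq_mul, smul_eq_mul]

/-- the γ-derivative at γ = 0 of `log det(I + t A^γ + √t·w (v^γ)ᵀ)` equals
`√t ⟨δv, w⟩ + t (tr(δA) − ⟨v, w⟩⟨δv, w⟩) + o(t)` as `t → 0⁺`,
where `δA = (d/dγ)A^γ|₀` and `δv = (d/dγ)v^γ|₀`. -/
theorem deriv_logdet_euler_step_expansion (M : ℕ)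
    (A : ℝ → Matrix (Fin M) (Fin M) ℝ) (v : ℝ → Fin M → ℝ) (w : Fin M → ℝ)
    (hA : ContDiff ℝ 1 A) (hv : ContDiff ℝ 1 v) :
    Tendsto (fun t : ℝ =>
      (deriv (fun γ : ℝ =>
          Real.log (((1 : Matrix (Fin M) (Fin M) ℝ) + t • A γ
            + Real.sqrt t • vecMulVec w (v γ)).det)) 0
        - (Real.sqrt t * (deriv v 0 ⬝ᵥ w)
            + t * ((deriv A 0).trace - (v 0 ⬝ᵥ w) * (deriv v 0 ⬝ᵥ w)))) / t)
      (nhdsWithin 0 (Set.Ioi 0)) (nhds 0) := by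
  classical
  set A' := deriv A 0 with hA'
  set v' := deriv v 0 with hv'
  set A0 := A 0 with hA0
  set v0 := v 0 with hv0
  set Bm : ℝ → Matrix (Fin M) (Fin M) ℝ :=
    fun s => 1 + s ^ 2 • A0 + s • vecMulVec w v0 with hBm
  set E₁ : ℝ → Matrix (Fin M) (Fin M) ℝ := fun s => s • A0 + vecMulVec w v0 with hE₁
  set H₁ : ℝ → Matrix (Fin M) (Fin M) ℝ := fun s => s • A' + vecMulVec w v' with hH₁
  set h : ℝ → ℝ := fun s =>
    -(s ^ 2 * (A0 * A').trace) - s * (A0 * vecMulVec w v').trace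
      - s * (vecMulVec w v0 * A').trace
      + s * ((adjugate (Bm s) * (E₁ s * (E₁ s * H₁ s))).trace / (Bm s).det) with hh
  have hBmc : Continuous Bm := by rw [hBm]; fun_prop
  have hE₁c : Continuous E₁ := by rw [hE₁]; fun_prop
  have hH₁c : Continuous H₁ := by rw [hH₁]; fun_prop
  have hdetBmc : Continuous fun s => (Bm s).det := hBmc.matrix_det
  have hBm0 : Bm 0 = 1 := by rw [hBm]; simp
  have hdetBm0 : (Bm 0).det = 1 := by rw [hBm0, Matrix.det_one]
  have hRc : Continuous fun s => (adjugate (Bm s) * (E₁ s * (E₁ s * H₁ s))).trace :=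
    ((hBmc.matrix_adjugate).matrix_mul ((hE₁c).matrix_mul ((hE₁c).matrix_mul hH₁c))).matrix_trace
  have hhc : Tendsto h (nhds 0) (nhds 0) := by
    have hq : ContinuousAt
        (fun s => (adjugate (Bm s) * (E₁ s * (E₁ s * H₁ s))).trace / (Bm s).det) 0 :=
      (hRc.continuousAt).div hdetBmc.continuousAt (by rw [hdetBm0]; exact one_ne_zero)
    have hC : ContinuousAt h 0 := by
      rw [hh]
      exact ((((continuous_pow 2).continuousAt.mul continuousAt_const).neg.sub
        (continuousAt_id.mul continuousAt_const)).sub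
        (continuousAt_id.mul continuousAt_const)).add (continuousAt_id.mul hq)
    have h0 : h 0 = 0 := by rw [hh]; norm_num
    simpa [h0] using hC.tendsto
  have hsqrt : Tendsto Real.sqrt (nhdsWithin 0 (Set.Ioi 0)) (nhds 0) := by
    have h1 := Real.continuous_sqrt.tendsto 0
    rw [Real.sqrt_zero] at h1
    exact h1.mono_left nhdsWithin_le_nhds
  have hcomp : Tendsto (fun t => h (Real.sqrt t)) (nhdsWithin 0 (Set.Ioi 0)) (nhds 0) :=
    hhc.comp hsqrt
  have hne : ∀ᶠ t in nhdsWithin 0 (Set.Ioi 0), (Bm (Real.sqrt t)).det ≠ 0 := by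
    have h2 : Tendsto (fun t => (Bm (Real.sqrt t)).det)
        (nhdsWithin 0 (Set.Ioi 0)) (nhds 1) := by
      have h3 := hdetBmc.continuousAt (x := 0)
      rw [ContinuousAt, hdetBm0] at h3
      exact h3.comp hsqrt
    exact h2.eventually_ne one_ne_zero
  refine Tendsto.congr' ?_ hcomp
  filter_upwards [self_mem_nhdsWithin, hne] with t htmem hd
  have ht : (0:ℝ) < t := htmem
  set s := Real.sqrt t with hs
  have hs0 : s ≠ 0 := ne_of_gt (Real.sqrt_pos.2 ht)
  have hs2 : s ^ 2 = t := Real.sq_sqrt ht.le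
  rw [← hs2]
  -- derivative computation
  have hAe : ∀ i j, HasDerivAt (fun γ => A γ i j) (A' i j) 0 := fun i j =>
    hasDerivAt_entry ((hA.differentiable one_ne_zero 0).hasDerivAt) i j
  have hve : ∀ j, HasDerivAt (fun γ => v γ j) (v' j) 0 := fun j =>
    hasDerivAt_pi.1 ((hv.differentiable one_ne_zero 0).hasDerivAt) j
  have hFe : ∀ i j, HasDerivAt
      (fun γ => ((1 : Matrix (Fin M) (Fin M) ℝ) + s ^ 2 • A γ + s • vecMulVec w (v γ)) i j)
      ((s ^ 2 • A' + s • vecMulVec w v') i j) 0 := by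
    intro i j
    have h1 : HasDerivAt
        (fun γ => (1 : Matrix (Fin M) (Fin M) ℝ) i j
          + (s ^ 2 * A γ i j + s * (w i * v γ j)))
        (0 + (s ^ 2 * A' i j + s * (w i * v' j))) 0 :=
      (hasDerivAt_const _ _).add
        (((hAe i j).const_mul (s ^ 2)).add (((hve j).const_mul (w i)).const_mul s))
    have e1 : (fun γ => ((1 : Matrix (Fin M) (Fin M) ℝ) + s ^ 2 • A γ
          + s • vecMulVec w (v γ)) i j)
        = fun γ => (1 : Matrix (Fin M) (Fin M) ℝ) i j
            + (s ^ 2 * A γ i j + s * (w i * v γ j)) := by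
      funext γ
      simp [Matrix.add_apply, Matrix.smul_apply, vecMulVec_apply, add_assoc]
    have e2 : (s ^ 2 • A' + s • vecMulVec w v') i j
        = 0 + (s ^ 2 * A' i j + s * (w i * v' j)) := by
      simp [Matrix.add_apply, Matrix.smul_apply, vecMulVec_apply]
    rw [e1, e2]
    exact h1
  have hF0 : ((1 : Matrix (Fin M) (Fin M) ℝ) + s ^ 2 • A 0 + s • vecMulVec w (v 0)) = Bm s := by
    rw [hBm]
  have hdet : HasDerivAt
      (fun γ => ((1 : Matrix (Fin M) (Fin M) ℝ) + s ^ 2 • A γ + s • vecMulVec w (v γ)).det)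
      ((adjugate (Bm s) * (s ^ 2 • A' + s • vecMulVec w v')).trace) 0 := by
    have h4 := hasDerivAt_det'
      (F := fun γ => (1 : Matrix (Fin M) (Fin M) ℝ) + s ^ 2 • A γ + s • vecMulVec w (v γ))
      (x := 0) hFe
    beta_reduce at h4
    rwa [show ((1 : Matrix (Fin M) (Fin M) ℝ) + s ^ 2 • A 0 + s • vecMulVec w (v 0)) = Bm s
      from hF0] at h4
  have hdne : ((1 : Matrix (Fin M) (Fin M) ℝ) + s ^ 2 • A 0 + s • vecMulVec w (v 0)).det ≠ 0 := by
    rw [hF0]; exact hd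
  have hlog := (hdet.log hdne).deriv
  rw [hlog, hh]
  beta_reduce
  rw [hF0]
  have hBE : Bm s = 1 + (s ^ 2 • A0 + s • vecMulVec w v0) := by
    rw [hBm]; exact add_assoc _ _ _
  have hkey := trace_adj_expand (s ^ 2 • A0 + s • vecMulVec w v0)
    (s ^ 2 • A' + s • vecMulVec w v')
  rw [← hBE] at hkey
  have htrH : (s ^ 2 • A' + s • vecMulVec w v').trace
      = s ^ 2 * A'.trace + s * (v' ⬝ᵥ w) := by
    rw [Matrix.trace_add, Matrix.trace_smul, Matrix.trace_smul, trace_vecMulVec,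
      smul_eq_mul, smul_eq_mul, dotProduct_comm]
  have htrEH : ((s ^ 2 • A0 + s • vecMulVec w v0) * (s ^ 2 • A' + s • vecMulVec w v')).trace
      = s ^ 4 * (A0 * A').trace + s ^ 3 * (A0 * vecMulVec w v').trace
        + s ^ 3 * (vecMulVec w v0 * A').trace + s ^ 2 * ((v0 ⬝ᵥ w) * (v' ⬝ᵥ w)) := by
    simp only [Matrix.add_mul, Matrix.mul_add, Matrix.smul_mul, Matrix.mul_smul,
      vecMulVec_mul_vecMulVec, Matrix.trace_add, Matrix.trace_smul, smul_smul, smul_eq_mul,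
      trace_vecMulVec]
    rw [dotProduct_comm w v']
    ring
  have e3 : s ^ 2 • A0 + s • vecMulVec w v0 = s • E₁ s := by
    rw [hE₁]
    show s ^ 2 • A0 + s • vecMulVec w v0 = s • (s • A0 + vecMulVec w v0)
    rw [smul_add, smul_smul, ← pow_two]
  have e4 : s ^ 2 • A' + s • vecMulVec w v' = s • H₁ s := by
    rw [hH₁]
    show s ^ 2 • A' + s • vecMulVec w v' = s • (s • A' + vecMulVec w v')
    rw [smul_add, smul_smul, ← pow_two]
  have hcube : (s ^ 2 • A0 + s • vecMulVec w v0) * ((s ^ 2 • A0 + s • vecMulVec w v0)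
        * (s ^ 2 • A' + s • vecMulVec w v')) = s ^ 3 • (E₁ s * (E₁ s * H₁ s)) := by
    rw [e3, e4]
    simp only [Matrix.smul_mul, Matrix.mul_smul, smul_smul]
    congr 1
    ring
  rw [htrH, htrEH, hcube, Matrix.mul_smul, Matrix.trace_smul, smul_eq_mul] at hkey
  rw [hkey]
  field_simp
  ring
end

section
/- Let F : R^M → R^M be C^2, σ : R^M → R be C^3, fix x ∈ R^M, w ∈ R^M, p ∈ R^M, c ∈ R, and let A = DF(x), v = ∇σ(x). Then, as t → 0⁺, the inner product of the gradient of the log Jacobian determinant with the first-order response of the initial condition satisfies ⟨ ∇_x log det(I + t A + √t w v^T), −(I + t A + √t w v^T)^{-1}(t p + √t c w) ⟩ = −t c ⟨∇²σ(x) w, w⟩ + o(t). -/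
open Matrix Filter Topology

/-- the gradient (column vector of partial derivatives) of a scalar function on `ℝ^M` -/
noncomputable def grad {M : ℕ} (φ : (Fin M → ℝ) → ℝ) (x : Fin M → ℝ) : Fin M → ℝ :=
  fun j => fderiv ℝ φ x (Pi.single j 1)

/-- the Jacobian matrix of a map `ℝ^M → ℝ^M` -/
noncomputable def jac {M : ℕ} (F : (Fin M → ℝ) → (Fin M → ℝ)) (x : Fin M → ℝ) :
    Matrix (Fin M) (Fin M) ℝ :=
  Matrix.of fun i j => fderiv ℝ F x (Pi.single j 1) i

/-- directional derivative expression for det -/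
noncomputable def dsum {m : ℕ} (N D : Matrix (Fin m) (Fin m) ℝ) : ℝ :=
  ∑ τ : Equiv.Perm (Fin m), ((Equiv.Perm.sign τ : ℤ) : ℝ) *
    ∑ i, (∏ j ∈ Finset.univ.erase i, N (τ j) j) * D (τ i) i

lemma hasFDerivAt_det' {E : Type*} [NormedAddCommGroup E] [NormedSpace ℝ E] {m : ℕ}
    (G : E → Matrix (Fin m) (Fin m) ℝ) (G' : Fin m → Fin m → (E →L[ℝ] ℝ)) (x : E)
    (hG : ∀ i k, HasFDerivAt (fun y => G y i k) (G' i k) x) :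
    HasFDerivAt (fun y => (G y).det)
      (∑ τ : Equiv.Perm (Fin m), ((Equiv.Perm.sign τ : ℤ) : ℝ) •
        ∑ i, (∏ j ∈ Finset.univ.erase i, G x (τ j) j) • G' (τ i) i) x := by
  have h2 := HasFDerivAt.sum (x := x)
    (A := fun τ : Equiv.Perm (Fin m) => fun y => ((Equiv.Perm.sign τ : ℤ) : ℝ) * ∏ i, G y (τ i) i)
    (A' := fun τ : Equiv.Perm (Fin m) => ((Equiv.Perm.sign τ : ℤ) : ℝ) •
      ∑ i, (∏ j ∈ Finset.univ.erase i, G x (τ j) j) • G' (τ i) i)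
    (u := Finset.univ)
    (fun τ _ => (HasFDerivAt.finset_prod (u := Finset.univ)
      (g := fun i y => G y (τ i) i) (g' := fun i => G' (τ i) i)
      (fun i _ => hG (τ i) i)).const_mul _)
  have hfun : (fun y => ∑ τ ∈ Finset.univ, ((Equiv.Perm.sign τ : ℤ) : ℝ) * ∏ i, G y (τ i) i)
      = fun y => (G y).det := by
    funext y; rw [Matrix.det_apply']
  exact h2.congr_of_eventuallyEq (Filter.Eventually.of_forall fun y =>
    (congrFun hfun y).symm.trans (Finset.sum_apply y Finset.univ
      (fun τ : Equiv.Perm (Fin m) => fun y => ((Equiv.Perm.sign τ : ℤ) : ℝ) * ∏ i, G y (τ i) i)).symm)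

lemma hasFDerivAt_log_det {E : Type*} [NormedAddCommGroup E] [NormedSpace ℝ E] {m : ℕ}
    (G : E → Matrix (Fin m) (Fin m) ℝ) (G' : Fin m → Fin m → (E →L[ℝ] ℝ)) (x : E)
    (hG : ∀ i k, HasFDerivAt (fun y => G y i k) (G' i k) x)
    (hdet : (G x).det ≠ 0) :
    HasFDerivAt (fun y => Real.log (G y).det)
      (((G x).det)⁻¹ • ∑ τ : Equiv.Perm (Fin m), ((Equiv.Perm.sign τ : ℤ) : ℝ) •
        ∑ i, (∏ j ∈ Finset.univ.erase i, G x (τ j) j) • G' (τ i) i) x :=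
  by have := (Real.hasDerivAt_log hdet).comp_hasFDerivAt x (hasFDerivAt_det' G G' x hG); exact this

lemma dsum_one {m : ℕ} (D : Matrix (Fin m) (Fin m) ℝ) : dsum 1 D = ∑ i, D i i := by
  unfold dsum
  rw [Finset.sum_eq_single (1 : Equiv.Perm (Fin m))]
  · simp [Matrix.one_apply]
  · intro τ _ hτ
    have h0 : ∀ i : Fin m,
        ∏ j ∈ Finset.univ.erase i, (1 : Matrix (Fin m) (Fin m) ℝ) (τ j) j = 0 := by
      intro i
      obtain ⟨a, ha⟩ : ∃ a, τ a ≠ a := by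
        by_contra h; push_neg at h; exact hτ (Equiv.ext h)
      rcases eq_or_ne a i with rfl | hne
      · refine Finset.prod_eq_zero (i := τ a)
          (Finset.mem_erase.mpr ⟨ha, Finset.mem_univ _⟩) ?_
        have : τ (τ a) ≠ τ a := fun hh => ha (τ.injective hh)
        simp [Matrix.one_apply, this]
      · exact Finset.prod_eq_zero (Finset.mem_erase.mpr ⟨hne, Finset.mem_univ _⟩)
          (by simp [Matrix.one_apply, ha])
    simp [h0]
  · simp

lemma dsum_smul_add {m : ℕ} (N B C : Matrix (Fin m) (Fin m) ℝ) (a b : ℝ) :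
    dsum N (a • B + b • C) = a * dsum N B + b * dsum N C := by
  unfold dsum
  rw [Finset.mul_sum, Finset.mul_sum, ← Finset.sum_add_distrib]
  refine Finset.sum_congr rfl fun τ _ => ?_
  simp only [Finset.mul_sum, ← Finset.sum_add_distrib]
  refine Finset.sum_congr rfl fun i _ => ?_
  simp only [Matrix.add_apply, Matrix.smul_apply, smul_eq_mul]
  ring

lemma continuous_dsum {m : ℕ} (D : Matrix (Fin m) (Fin m) ℝ)
    {f : ℝ → Matrix (Fin m) (Fin m) ℝ} (hf : ∀ i k, Continuous fun s => f s i k) :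
    Continuous fun s => dsum (f s) D := by
  unfold dsum
  refine continuous_finset_sum _ fun τ _ => Continuous.mul continuous_const ?_
  refine continuous_finset_sum _ fun i _ => Continuous.mul ?_ continuous_const
  exact continuous_finset_prod _ fun j _ => hf (τ j) j

noncomputable def Nmat {M : ℕ} (A W : Matrix (Fin M) (Fin M) ℝ) (s : ℝ) :
    Matrix (Fin M) (Fin M) ℝ :=
  1 + s ^ 2 • A + s • W

lemma Nmat_zero {M : ℕ} (A W : Matrix (Fin M) (Fin M) ℝ) : Nmat A W 0 = 1 := by
  simp [Nmat]

lemma Nmat_entry_continuous {M : ℕ} (A W : Matrix (Fin M) (Fin M) ℝ) (i k : Fin M) :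
    Continuous fun s => Nmat A W s i k := by
  simp only [Nmat, Matrix.add_apply, Matrix.smul_apply, smul_eq_mul]
  fun_prop

lemma Nmat_continuous {M : ℕ} (A W : Matrix (Fin M) (Fin M) ℝ) :
    Continuous fun s => Nmat A W s :=
  continuous_matrix fun i k => Nmat_entry_continuous A W i k

noncomputable def hfun {M : ℕ} (A W : Matrix (Fin M) (Fin M) ℝ)
    (Bm Wm : Fin M → Matrix (Fin M) (Fin M) ℝ) (p w : Fin M → ℝ) (c K s : ℝ) : ℝ :=
  -((Nmat A W s).det)⁻¹ ^ 2 *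
    ∑ j, (s * dsum (Nmat A W s) (Bm j) + dsum (Nmat A W s) (Wm j)) *
      ((Nmat A W s).adjugate *ᵥ (s • p + c • w)) j
  + c * K

lemma continuousAt_hfun {M : ℕ} (A W : Matrix (Fin M) (Fin M) ℝ)
    (Bm Wm : Fin M → Matrix (Fin M) (Fin M) ℝ) (p w : Fin M → ℝ) (c K : ℝ) :
    ContinuousAt (hfun A W Bm Wm p w c K) 0 := by
  have cdet : Continuous fun s => (Nmat A W s).det := (Nmat_continuous A W).matrix_det
  have cadj : Continuous fun s => (Nmat A W s).adjugate := (Nmat_continuous A W).matrix_adjugate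
  have hinv : ContinuousAt (fun s => ((Nmat A W s).det)⁻¹) 0 := by
    refine cdet.continuousAt.inv₀ ?_
    simp [Nmat_zero]
  have csum : Continuous fun s =>
      ∑ j, (s * dsum (Nmat A W s) (Bm j) + dsum (Nmat A W s) (Wm j)) *
        ((Nmat A W s).adjugate *ᵥ (s • p + c • w)) j := by
    refine continuous_finset_sum _ fun j _ => Continuous.mul ?_ ?_
    · exact (continuous_id.mul (continuous_dsum _ (Nmat_entry_continuous A W))).add
        (continuous_dsum _ (Nmat_entry_continuous A W))
    · simp only [Matrix.mulVec, dotProduct, Pi.add_apply, Pi.smul_apply, smul_eq_mul]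
      refine continuous_finset_sum _ fun k _ => Continuous.mul ?_ (by fun_prop)
      exact (continuous_apply k).comp ((continuous_apply j).comp cadj)
  exact (((hinv.pow 2).neg.mul csum.continuousAt)).add continuousAt_const

lemma hfun_zero {M : ℕ} (A W : Matrix (Fin M) (Fin M) ℝ)
    (Bm Wm : Fin M → Matrix (Fin M) (Fin M) ℝ) (p w : Fin M → ℝ) (c K : ℝ) :
    hfun A W Bm Wm p w c K 0
      = -∑ j, (∑ i, Wm j i i) * (c * w j) + c * K := by
  simp [hfun, Nmat_zero, dsum_one, Matrix.one_mulVec]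

/-- second-order partials of F in direction `j` as a matrix -/
noncomputable def Bmat {M : ℕ} (F : (Fin M → ℝ) → (Fin M → ℝ)) (x : Fin M → ℝ) (j : Fin M) :
    Matrix (Fin M) (Fin M) ℝ :=
  Matrix.of fun i k => fderiv ℝ (fun y => fderiv ℝ F y (Pi.single k 1) i) x (Pi.single j 1)

/-- Hessian column of σ in direction `j` -/
noncomputable def uvec {M : ℕ} (σ : (Fin M → ℝ) → ℝ) (x : Fin M → ℝ) (j : Fin M) :
    Fin M → ℝ :=
  fun k => fderiv ℝ (fun y => fderiv ℝ σ y (Pi.single k 1)) x (Pi.single j 1)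

lemma grad_logdet_eq {M : ℕ} (F : (Fin M → ℝ) → (Fin M → ℝ)) (σ : (Fin M → ℝ) → ℝ)
    (x w : Fin M → ℝ) (t : ℝ)
    (hA : ∀ k i : Fin M, DifferentiableAt ℝ (fun y => fderiv ℝ F y (Pi.single k 1) i) x)
    (hv : ∀ k : Fin M, DifferentiableAt ℝ (fun y => fderiv ℝ σ y (Pi.single k 1)) x)
    (hdet : ((1 : Matrix (Fin M) (Fin M) ℝ) + t • jac F x
        + Real.sqrt t • vecMulVec w (grad σ x)).det ≠ 0) :
    grad (fun y => Real.log (((1 : Matrix (Fin M) (Fin M) ℝ)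
        + t • jac F y + Real.sqrt t • vecMulVec w (grad σ y)).det)) x
      = fun j => (((1 : Matrix (Fin M) (Fin M) ℝ) + t • jac F x
          + Real.sqrt t • vecMulVec w (grad σ x)).det)⁻¹ *
        dsum ((1 : Matrix (Fin M) (Fin M) ℝ) + t • jac F x
            + Real.sqrt t • vecMulVec w (grad σ x))
          (t • Bmat F x j + Real.sqrt t • vecMulVec w (uvec σ x j)) := by
  classical
  set G : (Fin M → ℝ) → Matrix (Fin M) (Fin M) ℝ :=
    fun y => (1 : Matrix (Fin M) (Fin M) ℝ) + t • jac F y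
      + Real.sqrt t • vecMulVec w (grad σ y) with hGdef
  set G' : Fin M → Fin M → ((Fin M → ℝ) →L[ℝ] ℝ) := fun i k =>
    t • fderiv ℝ (fun y => fderiv ℝ F y (Pi.single k 1) i) x
      + Real.sqrt t • (w i • fderiv ℝ (fun y => fderiv ℝ σ y (Pi.single k 1)) x) with hG'def
  have hG : ∀ i k, HasFDerivAt (fun y => G y i k) (G' i k) x := by
    intro i k
    have h1 : (fun y => G y i k)
        = fun y => (1 : Matrix (Fin M) (Fin M) ℝ) i k
          + (t * fderiv ℝ F y (Pi.single k 1) i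
            + Real.sqrt t * (w i * fderiv ℝ σ y (Pi.single k 1))) := by
      funext y
      simp [hGdef, jac, grad, Matrix.add_apply, Matrix.smul_apply,
        Matrix.vecMulVec_apply, smul_eq_mul, Matrix.of_apply]
      exact add_assoc _ _ _
    rw [h1, hG'def]
    exact (((hA k i).hasFDerivAt.const_mul t).add
      (((hv k).hasFDerivAt.const_mul (w i)).const_mul (Real.sqrt t))).const_add _
  have hlog := hasFDerivAt_log_det G G' x hG hdet
  funext j
  show fderiv ℝ (fun y => Real.log ((G y).det)) x (Pi.single j 1) = _
  rw [hlog.fderiv]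
  simp only [ContinuousLinearMap.smul_apply, ContinuousLinearMap.coe_sum',
    Finset.sum_apply, ContinuousLinearMap.add_apply, smul_eq_mul]
  congr 1

theorem grad_logdet_dot_response_expansion (M : ℕ)
    (F : (Fin M → ℝ) → (Fin M → ℝ)) (σ : (Fin M → ℝ) → ℝ)
    (hF : ContDiff ℝ 2 F) (hσ : ContDiff ℝ 3 σ)
    (x w p : Fin M → ℝ) (c : ℝ) :
    Tendsto (fun t : ℝ =>
      ((grad (fun y => Real.log (((1 : Matrix (Fin M) (Fin M) ℝ)
            + t • jac F y + Real.sqrt t • vecMulVec w (grad σ y)).det)) x ⬝ᵥ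
          (-(((1 : Matrix (Fin M) (Fin M) ℝ) + t • jac F x
              + Real.sqrt t • vecMulVec w (grad σ x))⁻¹ *ᵥ
            (t • p + (Real.sqrt t * c) • w))))
        + t * c * ((jac (fun y => grad σ y) x *ᵥ w) ⬝ᵥ w)) / t)
      (nhdsWithin 0 (Set.Ioi 0)) (nhds 0) := by
  classical
  have hFd : ContDiff ℝ 1 (fderiv ℝ F) := hF.fderiv_right (by norm_num)
  have hσd : ContDiff ℝ 2 (fderiv ℝ σ) := hσ.fderiv_right (by norm_num)
  have hA : ∀ k i : Fin M, DifferentiableAt ℝ (fun y => fderiv ℝ F y (Pi.single k 1) i) x := by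
    intro k i
    exact (((ContinuousLinearMap.proj (R := ℝ) (φ := fun _ : Fin M => ℝ) i).comp
      (ContinuousLinearMap.apply ℝ (Fin M → ℝ) (Pi.single k 1))).differentiable.comp
      (hFd.differentiable one_ne_zero)).differentiableAt
  have hv : ∀ k : Fin M, DifferentiableAt ℝ (fun y => fderiv ℝ σ y (Pi.single k 1)) x := by
    intro k
    exact (((ContinuousLinearMap.apply ℝ ℝ (Pi.single k 1)).differentiable.comp
      (hσd.differentiable (by norm_num))).differentiableAt)
  set A : Matrix (Fin M) (Fin M) ℝ := jac F x with hAdef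
  set W : Matrix (Fin M) (Fin M) ℝ := vecMulVec w (grad σ x) with hWdef
  set K : ℝ := (jac (fun y => grad σ y) x *ᵥ w) ⬝ᵥ w with hKdef
  set Bm : Fin M → Matrix (Fin M) (Fin M) ℝ := Bmat F x with hBmdef
  set Wm : Fin M → Matrix (Fin M) (Fin M) ℝ :=
    fun j => vecMulVec w (uvec σ x j) with hWmdef
  -- eventually the determinant is nonzero
  have hev : ∀ᶠ t in nhdsWithin (0:ℝ) (Set.Ioi 0),
      (Nmat A W (Real.sqrt t)).det ≠ 0 := by
    have hc : ContinuousAt (fun t : ℝ => (Nmat A W (Real.sqrt t)).det) 0 :=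
      ((Nmat_continuous A W).matrix_det.continuousAt).comp Real.continuous_sqrt.continuousAt
    have h1 : Tendsto (fun t : ℝ => (Nmat A W (Real.sqrt t)).det)
        (nhdsWithin (0:ℝ) (Set.Ioi 0)) (nhds 1) := by
      have h2 := hc.tendsto
      simp only [Real.sqrt_zero, Nmat_zero, Matrix.det_one] at h2
      exact h2.mono_left nhdsWithin_le_nhds
    exact h1.eventually_ne one_ne_zero
  -- key eventual equality
  have heq : ∀ᶠ t in nhdsWithin (0:ℝ) (Set.Ioi 0),
      ((grad (fun y => Real.log (((1 : Matrix (Fin M) (Fin M) ℝ)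
            + t • jac F y + Real.sqrt t • vecMulVec w (grad σ y)).det)) x ⬝ᵥ
          (-(((1 : Matrix (Fin M) (Fin M) ℝ) + t • jac F x
              + Real.sqrt t • vecMulVec w (grad σ x))⁻¹ *ᵥ
            (t • p + (Real.sqrt t * c) • w))))
        + t * c * K) / t = hfun A W Bm Wm p w c K (Real.sqrt t) := by
    filter_upwards [self_mem_nhdsWithin, hev] with t ht hdet
    have ht0 : (0:ℝ) < t := ht
    set s : ℝ := Real.sqrt t with hsdef
    have hs2 : s ^ 2 = t := Real.sq_sqrt ht0.le
    have hs0 : s ≠ 0 := by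
      rw [hsdef]
      exact (Real.sqrt_pos.mpr ht0).ne'
    have hNt : (1 : Matrix (Fin M) (Fin M) ℝ) + t • jac F x + s • vecMulVec w (grad σ x)
        = Nmat A W s := by
      rw [Nmat, hs2, hAdef, hWdef]
    have hdet' : ((1 : Matrix (Fin M) (Fin M) ℝ) + t • jac F x
        + Real.sqrt t • vecMulVec w (grad σ x)).det ≠ 0 := by
      rw [← hsdef, hNt]; exact hdet
    rw [grad_logdet_eq F σ x w t hA hv hdet']
    rw [Matrix.inv_def, Ring.inverse_eq_inv, Matrix.smul_mulVec]
    have hz : t • p + (Real.sqrt t * c) • w = s • (s • p + c • w) := by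
      rw [smul_add, smul_smul, smul_smul, ← hsdef, ← hs2]; ring_nf
    rw [hz, Matrix.mulVec_smul, dotProduct_neg]
    simp only [hfun, ← hsdef, ← hNt, dotProduct, Pi.smul_apply, smul_eq_mul]
    set N : Matrix (Fin M) (Fin M) ℝ :=
      (1 : Matrix (Fin M) (Fin M) ℝ) + t • jac F x + s • vecMulVec w (grad σ x) with hNdef
    set d : ℝ := (N.det)⁻¹ with hddef
    set Y : Fin M → ℝ := N.adjugate *ᵥ (s • p + c • w) with hYdef
    have hsum : ∑ j, d * dsum N (t • Bm j + s • Wm j) * (d * (s * Y j))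
        = s ^ 2 * (d ^ 2 * ∑ j, (s * dsum N (Bm j) + dsum N (Wm j)) * Y j) := by
      rw [Finset.mul_sum, Finset.mul_sum]
      refine Finset.sum_congr rfl fun j _ => ?_
      rw [dsum_smul_add, ← hs2]
      ring
    rw [hsum, ← hs2]
    field_simp
  rw [tendsto_congr' heq]
  have hsq : Tendsto Real.sqrt (nhdsWithin (0:ℝ) (Set.Ioi 0)) (nhds 0) := by
    have := Real.continuous_sqrt.continuousAt (x := (0:ℝ))
    rw [ContinuousAt, Real.sqrt_zero] at this
    exact this.mono_left nhdsWithin_le_nhds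
  have h0 : hfun A W Bm Wm p w c K 0 = 0 := by
    rw [hfun_zero]
    have hjacK : ∀ i j : Fin M, jac (fun y => grad σ y) x i j = uvec σ x j i := by
      intro i j
      show fderiv ℝ (fun y => grad σ y) x (Pi.single j 1) i = _
      have hgr : (fun y => grad σ y) = fun y k => fderiv ℝ σ y (Pi.single k 1) := rfl
      rw [hgr, fderiv_pi (fun k => hv k)]
      rfl
    have hKval : c * K = ∑ j, (∑ i, Wm j i i) * (c * w j) := by
      rw [hKdef]
      simp only [dotProduct, Matrix.mulVec, hjacK, hWmdef, Matrix.vecMulVec_apply]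
      simp only [Finset.mul_sum, Finset.sum_mul]
      rw [Finset.sum_comm]
      refine Finset.sum_congr rfl fun j _ => Finset.sum_congr rfl fun i _ => by ring
    rw [hKval]
    ring
  have := (continuousAt_hfun A W Bm Wm p w c K).tendsto.comp hsq
  rwa [h0] at this
end
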